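/- Let N ⊆ M_d(ℂ) be a unital *-subalgebra, E : M_d(ℂ) → N the trace-preserving conditional expectation onto N, and σ, ρ positive definite states on M_d(ℂ). Define U : M_d(ℂ) → M_d(ℂ) by U(X) := σ^{1/2} σ_N^{−1/2} E(X). Then for every t > 0, tr[σ^{1/2} (Γ + tI)^{−1} σ^{1/2}] − tr[σ_N^{1/2} (Γ_N + tI)^{−1} σ_N^{1/2}] ≥ t ‖U((Γ_N + tI)^{−1} σ_N^{1/2}) − (Γ + tI)^{−1} σ^{1/2}‖₂², where (Γ + tI)^{−1} σ^{1/2} and (Γ_N + tI)^{−1} σ_N^{1/2} denote matrix products. -/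

import Mathlib

open Matrix MeasureTheory Filter Topology Kronecker ComplexOrder

/-- Apply a real function to a matrix via the functional calculus for Hermitian
matrices (and return `0` on non-Hermitian input). -/
noncomputable def mfun {d : ℕ} (f : ℝ → ℝ) (A : Matrix (Fin d) (Fin d) ℂ) :
    Matrix (Fin d) (Fin d) ℂ :=
  if hA : A.IsHermitian then hA.cfc f else 0

/-- Square root of a Hermitian positive semidefinite matrix. -/
noncomputable def msqrt {d : ℕ} (A : Matrix (Fin d) (Fin d) ℂ) : Matrix (Fin d) (Fin d) ℂ :=
  mfun Real.sqrt A

/-- Inverse square root of a Hermitian positive semidefinite matrix (Moore–Penrose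
pseudoinverse of the square root in the singular case, since `(0 : ℝ)⁻¹ = 0`). -/
noncomputable def misqrt {d : ℕ} (A : Matrix (Fin d) (Fin d) ℂ) : Matrix (Fin d) (Fin d) ℂ :=
  mfun (fun x => (Real.sqrt x)⁻¹) A

/-- Inverse of a Hermitian matrix (Moore–Penrose pseudoinverse in the singular case). -/
noncomputable def minv {d : ℕ} (A : Matrix (Fin d) (Fin d) ℂ) : Matrix (Fin d) (Fin d) ℂ :=
  mfun (fun x => x⁻¹) A

/-- Logarithm of a positive definite matrix. -/
noncomputable def mlog {d : ℕ} (A : Matrix (Fin d) (Fin d) ℂ) : Matrix (Fin d) (Fin d) ℂ :=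
  mfun Real.log A

/-- Frobenius (Schatten-2) norm ‖A‖₂ = tr(AᴴA)^(1/2). -/
noncomputable def frob {n : Type*} [Fintype n] (A : Matrix n n ℂ) : ℝ :=
  Real.sqrt (Matrix.trace (Aᴴ * A)).re

/-- Operator norm ‖A‖∞ of a matrix, acting on the Euclidean space ℂᵈ. -/
noncomputable def opNorm {n : Type*} [Fintype n] [DecidableEq n] (A : Matrix n n ℂ) : ℝ :=
  ‖LinearMap.toContinuousLinearMap (Matrix.toEuclideanLin A)‖

/-- The Belavkin–Staszewski relative entropy
`Ŝ_BS(σ‖ρ) = −tr[σ log(σ^{−1/2} ρ σ^{−1/2})]`. -/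
noncomputable def BS {d : ℕ} (σ ρ : Matrix (Fin d) (Fin d) ℂ) : ℝ :=
  -(Matrix.trace (σ * mlog (misqrt σ * ρ * misqrt σ))).re

/-- The maximal f-divergence `Ŝ_f(σ‖ρ) = tr[ρ^{1/2} f(ρ^{−1/2} σ ρ^{−1/2}) ρ^{1/2}]`. -/
noncomputable def hatS {d : ℕ} (f : ℝ → ℝ) (σ ρ : Matrix (Fin d) (Fin d) ℂ) : ℝ :=
  (Matrix.trace (msqrt ρ * mfun f (misqrt ρ * σ * misqrt ρ) * msqrt ρ)).re

/-- The Umegaki relative entropy `D(σ‖ρ) = tr[σ (log σ − log ρ)]`. -/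
noncomputable def relEnt {d : ℕ} (σ ρ : Matrix (Fin d) (Fin d) ℂ) : ℝ :=
  (Matrix.trace (σ * (mlog σ - mlog ρ))).re

/-- The Choi matrix of a linear map between matrix algebras. -/
noncomputable def choi {d₁ d₂ : ℕ} (T : Matrix (Fin d₁) (Fin d₁) ℂ →ₗ[ℂ] Matrix (Fin d₂) (Fin d₂) ℂ) :
    Matrix (Fin d₁ × Fin d₂) (Fin d₁ × Fin d₂) ℂ :=
  Matrix.of fun p q => T (Matrix.single p.1 q.1 1) p.2 q.2

/-- A quantum channel: a completely positive (equivalently, with positive semidefinite Choi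
matrix) trace-preserving linear map. -/
def IsCPTP {d₁ d₂ : ℕ} (T : Matrix (Fin d₁) (Fin d₁) ℂ →ₗ[ℂ] Matrix (Fin d₂) (Fin d₂) ℂ) :
    Prop :=
  (choi T).PosSemidef ∧ ∀ A, (T A).trace = A.trace

/-- Partial trace over the second tensor factor. -/
noncomputable def ptrace2 {d₂ s : ℕ} (M : Matrix (Fin d₂ × Fin s) (Fin d₂ × Fin s) ℂ) :
    Matrix (Fin d₂) (Fin d₂) ℂ :=
  Matrix.of fun i j => ∑ k : Fin s, M (i, k) (j, k)

/-- The Loewner order: `A ≤ B` iff `B - A` is positive semidefinite. -/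
def Loewner {n : ℕ} (A B : Matrix (Fin n) (Fin n) ℂ) : Prop := (B - A).PosSemidef

/-- A function `f : (0,∞) → ℝ` is operator convex. -/
def OperatorConvex (f : ℝ → ℝ) : Prop :=
  ∀ (n : ℕ) (A B : Matrix (Fin n) (Fin n) ℂ), A.PosDef → B.PosDef →
    ∀ t : ℝ, 0 ≤ t → t ≤ 1 →
      Loewner (mfun f ((t : ℂ) • A + ((1 - t : ℝ) : ℂ) • B))
        ((t : ℂ) • mfun f A + ((1 - t : ℝ) : ℂ) • mfun f B)

/-- A function `f : (0,∞) → ℝ` is operator monotone decreasing. -/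
def OperatorAntitone (f : ℝ → ℝ) : Prop :=
  ∀ (n : ℕ) (A B : Matrix (Fin n) (Fin n) ℂ), A.PosDef → B.PosDef →
    Loewner A B → Loewner (mfun f B) (mfun f A)

section AuxHelpers
open Polynomial

variable {d : ℕ}

private lemma conj_mul_conj (u D1 D2 : Matrix (Fin d) (Fin d) ℂ) (h : star u * u = 1) :
    (u * D1 * star u) * (u * D2 * star u) = u * (D1 * D2) * star u := by
  calc (u * D1 * star u) * (u * D2 * star u)
      = u * (D1 * ((star u * u) * D2)) * star u := by simp only [mul_assoc]
    _ = u * (D1 * D2) * star u := by rw [h, one_mul]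

private lemma diag_congr (v w : Fin d → ℂ) (h : ∀ i, v i = w i) :
    (Matrix.diagonal v : Matrix (Fin d) (Fin d) ℂ) = Matrix.diagonal w := by rw [funext h]

section cfcsec
variable {A : Matrix (Fin d) (Fin d) ℂ} (hA : A.IsHermitian)

private lemma hu1 : (hA.eigenvectorUnitary : Matrix (Fin d) (Fin d) ℂ) *
    star (hA.eigenvectorUnitary : Matrix (Fin d) (Fin d) ℂ) = 1 :=
  Matrix.mem_unitaryGroup_iff.mp hA.eigenvectorUnitary.2

private lemma hu2 : star (hA.eigenvectorUnitary : Matrix (Fin d) (Fin d) ℂ) *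
    (hA.eigenvectorUnitary : Matrix (Fin d) (Fin d) ℂ) = 1 :=
  Matrix.mem_unitaryGroup_iff'.mp hA.eigenvectorUnitary.2

private lemma mcfc_mul (f g : ℝ → ℝ) :
    hA.cfc f * hA.cfc g = hA.cfc (fun x => f x * g x) := by
  simp only [Matrix.IsHermitian.cfc, Unitary.conjStarAlgAut_apply]
  rw [conj_mul_conj _ _ _ (hu2 hA), Matrix.diagonal_mul_diagonal,
    diag_congr _ ((RCLike.ofReal : ℝ → ℂ) ∘ (fun x => f x * g x) ∘ hA.eigenvalues)
      (fun i => by simp)]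

private lemma mcfc_congr {f g : ℝ → ℝ} (h : ∀ i, f (hA.eigenvalues i) = g (hA.eigenvalues i)) :
    hA.cfc f = hA.cfc g := by
  simp only [Matrix.IsHermitian.cfc]
  rw [diag_congr _ ((RCLike.ofReal : ℝ → ℂ) ∘ g ∘ hA.eigenvalues) (fun i => by simp [h i])]

private lemma mcfc_one : hA.cfc (fun _ => 1) = 1 := by
  simp only [Matrix.IsHermitian.cfc, Unitary.conjStarAlgAut_apply]
  rw [diag_congr _ (fun _ => (1:ℂ)) (fun i => by simp), Matrix.diagonal_one, mul_one, hu1 hA]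

private lemma mcfc_const (c : ℝ) : hA.cfc (fun _ => c) = (c : ℂ) • 1 := by
  simp only [Matrix.IsHermitian.cfc, Unitary.conjStarAlgAut_apply]
  rw [diag_congr _ (fun _ => (c:ℂ)) (fun i => by simp), ← Matrix.smul_one_eq_diagonal,
    mul_smul_comm, smul_mul_assoc, mul_one, hu1 hA]

private lemma mcfc_id : hA.cfc (fun x => x) = A := by
  conv_rhs => rw [hA.spectral_theorem]
  rfl

private lemma mcfc_sub (f g : ℝ → ℝ) :
    hA.cfc (fun x => f x - g x) = hA.cfc f - hA.cfc g := by
  simp only [Matrix.IsHermitian.cfc, Unitary.conjStarAlgAut_apply]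
  rw [← sub_mul, ← mul_sub, Matrix.diagonal_sub,
    diag_congr ((RCLike.ofReal : ℝ → ℂ) ∘ (fun x => f x - g x) ∘ hA.eigenvalues)
      (fun i => ((RCLike.ofReal : ℝ → ℂ) ∘ f ∘ hA.eigenvalues) i -
        ((RCLike.ofReal : ℝ → ℂ) ∘ g ∘ hA.eigenvalues) i)
      (fun i => by simp)]

private lemma mcfc_herm (f : ℝ → ℝ) : (hA.cfc f).IsHermitian := by
  simp only [Matrix.IsHermitian.cfc, Unitary.conjStarAlgAut_apply]
  have hD : (Matrix.diagonal ((RCLike.ofReal : ℝ → ℂ) ∘ f ∘ hA.eigenvalues))ᴴ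
      = Matrix.diagonal ((RCLike.ofReal : ℝ → ℂ) ∘ f ∘ hA.eigenvalues) := by
    rw [Matrix.diagonal_conjTranspose]
    exact diag_congr _ _ (fun i => by simp [Pi.star_apply, RCLike.star_def, RCLike.conj_ofReal])
  show _ᴴ = _
  simp only [Matrix.conjTranspose_mul, Matrix.star_eq_conjTranspose,
    Matrix.conjTranspose_conjTranspose, hD, mul_assoc]

private lemma mcfc_psd (f : ℝ → ℝ) (h : ∀ i, 0 ≤ f (hA.eigenvalues i)) :
    (hA.cfc f).PosSemidef := by
  simp only [Matrix.IsHermitian.cfc, Unitary.conjStarAlgAut_apply, Matrix.star_eq_conjTranspose]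
  refine Matrix.PosSemidef.mul_mul_conjTranspose_same ?_ _
  exact Matrix.PosSemidef.diagonal fun i => by
    simpa using Complex.zero_le_real.mpr (h i)

private lemma mcfc_aeval (f : ℝ → ℝ) : ∃ p : ℂ[X], hA.cfc f = aeval A p := by
  classical
  set u : Matrix (Fin d) (Fin d) ℂ := (hA.eigenvectorUnitary : Matrix (Fin d) (Fin d) ℂ) with hu
  let φ : Matrix (Fin d) (Fin d) ℂ →ₐ[ℂ] Matrix (Fin d) (Fin d) ℂ :=
  { toFun := fun M => u * M * star u
    map_one' := by show u * 1 * star u = 1; rw [mul_one, hu1 hA]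
    map_mul' := fun M M' => (conj_mul_conj u M M' (hu2 hA)).symm
    map_zero' := by show u * 0 * star u = 0; simp
    map_add' := fun M M' => by
      show u * (M + M') * star u = u * M * star u + u * M' * star u
      rw [mul_add, add_mul]
    commutes' := fun c => by
      show u * (algebraMap ℂ _ c) * star u = algebraMap ℂ _ c
      simp only [Algebra.algebraMap_eq_smul_one]
      rw [mul_smul_comm, smul_mul_assoc, mul_one, hu1 hA] }
  set sps : Finset ℝ := Finset.image hA.eigenvalues Finset.univ with hsps
  set p : ℂ[X] := Lagrange.interpolate sps (fun x : ℝ => (x : ℂ)) (fun x : ℝ => (f x : ℂ)) with hp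
  have hkey : ∀ i, Polynomial.eval ((hA.eigenvalues i : ℝ) : ℂ) p = (f (hA.eigenvalues i) : ℂ) :=
    fun i => Lagrange.eval_interpolate_at_node _ (Complex.ofReal_injective.injOn)
      (Finset.mem_image_of_mem _ (Finset.mem_univ i))
  refine ⟨p, ?_⟩
  have hdiag : aeval (Matrix.diagonal ((RCLike.ofReal : ℝ → ℂ) ∘ hA.eigenvalues)) p
      = Matrix.diagonal ((RCLike.ofReal : ℝ → ℂ) ∘ f ∘ hA.eigenvalues) := by
    rw [show (Matrix.diagonal ((RCLike.ofReal : ℝ → ℂ) ∘ hA.eigenvalues) :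
          Matrix (Fin d) (Fin d) ℂ)
        = Matrix.diagonalAlgHom ℂ ((RCLike.ofReal : ℝ → ℂ) ∘ hA.eigenvalues) from
        (Matrix.diagonalAlgHom_apply _ _).symm,
      aeval_algHom_apply, Matrix.diagonalAlgHom_apply]
    refine diag_congr _ _ (fun i => ?_)
    have h3 : (aeval ((RCLike.ofReal : ℝ → ℂ) ∘ hA.eigenvalues) p) i
        = aeval (((RCLike.ofReal : ℝ → ℂ) ∘ hA.eigenvalues) i) p :=
      (aeval_algHom_apply (Pi.evalAlgHom ℂ (fun _ => ℂ) i) _ p).symm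
    rw [h3]
    simpa [Polynomial.aeval_def, Polynomial.eval₂_eq_eval_map] using hkey i
  have hAeq : A = φ (Matrix.diagonal ((RCLike.ofReal : ℝ → ℂ) ∘ hA.eigenvalues)) :=
    hA.spectral_theorem
  conv_rhs => rw [hAeq]
  rw [aeval_algHom_apply, hdiag]
  rfl

private lemma mcfc_mem (N : Subalgebra ℂ (Matrix (Fin d) (Fin d) ℂ)) (hAN : A ∈ N) (f : ℝ → ℝ) :
    hA.cfc f ∈ N := by
  obtain ⟨p, hp⟩ := mcfc_aeval hA f
  rw [hp]
  exact Algebra.adjoin_le_iff.mpr (Set.singleton_subset_iff.mpr hAN)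
    (Polynomial.aeval_mem_adjoin_singleton ℂ A)

end cfcsec

section factssec
variable {P : Matrix (Fin d) (Fin d) ℂ}

private lemma msqrt_eq (hP : P.IsHermitian) : msqrt P = hP.cfc Real.sqrt := by
  rw [msqrt, mfun, dif_pos hP]

private lemma misqrt_eq (hP : P.IsHermitian) : misqrt P = hP.cfc (fun x => (Real.sqrt x)⁻¹) := by
  rw [misqrt, mfun, dif_pos hP]

private lemma msqrt_herm (hP : P.IsHermitian) : (msqrt P).IsHermitian := by
  rw [msqrt_eq hP]; exact mcfc_herm hP _

private lemma misqrt_herm (hP : P.IsHermitian) : (misqrt P).IsHermitian := by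
  rw [misqrt_eq hP]; exact mcfc_herm hP _

private lemma msqrt_mul_self (hP : P.PosDef) : msqrt P * msqrt P = P := by
  rw [msqrt_eq hP.1, mcfc_mul,
    mcfc_congr hP.1 (g := fun x => x) (fun i => Real.mul_self_sqrt (hP.eigenvalues_pos i).le),
    mcfc_id]

private lemma msqrt_mul_misqrt (hP : P.PosDef) : msqrt P * misqrt P = 1 := by
  rw [msqrt_eq hP.1, misqrt_eq hP.1, mcfc_mul,
    mcfc_congr hP.1 (g := fun _ => 1) (fun i => mul_inv_cancel₀
      (Real.sqrt_ne_zero'.mpr (hP.eigenvalues_pos i))),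
    mcfc_one]

private lemma misqrt_mul_msqrt (hP : P.PosDef) : misqrt P * msqrt P = 1 := by
  rw [msqrt_eq hP.1, misqrt_eq hP.1, mcfc_mul,
    mcfc_congr hP.1 (g := fun _ => 1) (fun i => inv_mul_cancel₀
      (Real.sqrt_ne_zero'.mpr (hP.eigenvalues_pos i))),
    mcfc_one]

private lemma smul_one_posDef {t : ℝ} (ht : 0 < t) :
    ((t : ℂ) • (1 : Matrix (Fin d) (Fin d) ℂ)).PosDef := by
  rw [Matrix.smul_one_eq_diagonal]
  exact Matrix.PosDef.diagonal fun _ => Complex.zero_lt_real.mpr ht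

private lemma posDef_inv_herm (hP : P.PosDef) : (P⁻¹).IsHermitian := by
  show _ᴴ = _
  rw [Matrix.conjTranspose_nonsing_inv, hP.1.eq]

private lemma psd_trace_re_nonneg {M : Matrix (Fin d) (Fin d) ℂ} (h : M.PosSemidef) :
    0 ≤ M.trace.re := by
  have hdiag : ∀ i, 0 ≤ (M i i).re := by
    intro i
    exact (Complex.le_def.mp h.diag_nonneg).1
  rw [Matrix.trace, Complex.re_sum]
  exact Finset.sum_nonneg fun i _ => hdiag i

private lemma frob_sq (M : Matrix (Fin d) (Fin d) ℂ) :
    frob M ^ 2 = (Matrix.trace (Mᴴ * M)).re :=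
  Real.sq_sqrt (psd_trace_re_nonneg (Matrix.posSemidef_conjTranspose_mul_self M))

end factssec

private lemma core {d : ℕ} (N : Subalgebra ℂ (Matrix (Fin d) (Fin d) ℂ))
    (hNstar : ∀ A ∈ N, Aᴴ ∈ N)
    (E : Matrix (Fin d) (Fin d) ℂ →ₗ[ℂ] Matrix (Fin d) (Fin d) ℂ)
    (hEmod : ∀ (A : Matrix (Fin d) (Fin d) ℂ), ∀ B ∈ N, E (A * B) = E A * B)
    (hEtr : ∀ A : Matrix (Fin d) (Fin d) ℂ, (E A).trace = A.trace)
    (σ ρ s si sn sni : Matrix (Fin d) (Fin d) ℂ) (t : ℝ) (ht : 0 < t)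
    (hΓpsd : (si * ρ * si).PosSemidef)
    (hsh : sᴴ = s) (hsnh : snᴴ = sn) (hsnih : sniᴴ = sni)
    (hs2 : s * s = σ) (hsn2 : sn * sn = E σ)
    (hssi : s * si = 1) (hsis : si * s = 1)
    (hsnsni : sn * sni = 1) (hsnisn : sni * sn = 1)
    (hsn_mem : sn ∈ N) (hsni_mem : sni ∈ N)
    (hAdet : IsUnit (si * ρ * si + (t:ℂ) • 1).det)
    (hANdet : IsUnit (sni * E ρ * sni + (t:ℂ) • 1).det)
    (hAinv_herm : ((si * ρ * si + (t:ℂ) • 1)⁻¹)ᴴ = (si * ρ * si + (t:ℂ) • 1)⁻¹)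
    (hANinv_herm : ((sni * E ρ * sni + (t:ℂ) • 1)⁻¹)ᴴ = (sni * E ρ * sni + (t:ℂ) • 1)⁻¹)
    (hANinv_mem : (sni * E ρ * sni + (t:ℂ) • 1)⁻¹ ∈ N)
    (hE_Y : E ((sni * E ρ * sni + (t:ℂ) • 1)⁻¹ * sn) = (sni * E ρ * sni + (t:ℂ) • 1)⁻¹ * sn) :
    (Matrix.trace (s * (si * ρ * si + (t:ℂ) • 1)⁻¹ * s)).re -
        (Matrix.trace (sn * (sni * E ρ * sni + (t:ℂ) • 1)⁻¹ * sn)).re ≥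
      t * frob (s * sni * E ((sni * E ρ * sni + (t:ℂ) • 1)⁻¹ * sn) -
        (si * ρ * si + (t:ℂ) • 1)⁻¹ * s) ^ 2 := by
  set Γ := si * ρ * si with hΓ_def
  set ΓN := sni * E ρ * sni with hΓN_def
  set A := Γ + (t:ℂ) • (1 : Matrix (Fin d) (Fin d) ℂ) with hA_def
  set AN := ΓN + (t:ℂ) • (1 : Matrix (Fin d) (Fin d) ℂ) with hAN_def
  set Y := AN⁻¹ * sn with hY_def
  rw [hE_Y]
  set X := A⁻¹ * s with hX_def
  set Z := s * sni * Y with hZ_def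
  set W := Z - X with hW_def
  -- cancellation rules (right-associated)
  have r_ssi : ∀ M : Matrix (Fin d) (Fin d) ℂ, s * (si * M) = M := fun M => by
    rw [← mul_assoc, hssi, one_mul]
  have r_sis : ∀ M : Matrix (Fin d) (Fin d) ℂ, si * (s * M) = M := fun M => by
    rw [← mul_assoc, hsis, one_mul]
  have r_snsni : ∀ M : Matrix (Fin d) (Fin d) ℂ, sn * (sni * M) = M := fun M => by
    rw [← mul_assoc, hsnsni, one_mul]
  have r_snisn : ∀ M : Matrix (Fin d) (Fin d) ℂ, sni * (sn * M) = M := fun M => by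
    rw [← mul_assoc, hsnisn, one_mul]
  have r_ss : ∀ M : Matrix (Fin d) (Fin d) ℂ, s * (s * M) = σ * M := fun M => by
    rw [← mul_assoc, hs2]
  have r_snsn : ∀ M : Matrix (Fin d) (Fin d) ℂ, sn * (sn * M) = E σ * M := fun M => by
    rw [← mul_assoc, hsn2]
  have r_sniEσ : ∀ M : Matrix (Fin d) (Fin d) ℂ, sni * (E σ * M) = sn * M := fun M => by
    rw [← r_snsn M, r_snisn]
  have hsniEσ : sni * E σ = sn := by
    rw [← hsn2, ← mul_assoc, hsnisn, one_mul]
  -- conditional expectation trace identity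
  have htrE : ∀ (M B : Matrix (Fin d) (Fin d) ℂ), B ∈ N → (M * B).trace = (E M * B).trace :=
    fun M B hB => by rw [← hEtr (M * B), hEmod M B hB]
  -- memberships
  have hY_mem : Y ∈ N := mul_mem hANinv_mem hsn_mem
  have hYH_mem : Yᴴ ∈ N := hNstar Y hY_mem
  -- inverses and transposes
  have hAX : A * X = s := by
    rw [hX_def, ← mul_assoc, Matrix.mul_nonsing_inv _ hAdet, one_mul]
  have hANY : AN * Y = sn := by
    rw [hY_def, ← mul_assoc, Matrix.mul_nonsing_inv _ hANdet, one_mul]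
  have hXh : Xᴴ = s * A⁻¹ := by
    rw [hX_def, Matrix.conjTranspose_mul, hsh, hAinv_herm]
  have hYh : Yᴴ = sn * AN⁻¹ := by
    rw [hY_def, Matrix.conjTranspose_mul, hsnh, hANinv_herm]
  have hZh : Zᴴ = Yᴴ * (sni * s) := by
    rw [hZ_def, Matrix.conjTranspose_mul (s * sni) Y, Matrix.conjTranspose_mul s sni, hsh,
      hsnih]
  -- the common value T
  have tsnY : (sn * Y).trace = (sn * AN⁻¹ * sn).trace := by
    rw [hY_def, ← mul_assoc]
  have tYhsn : (Yᴴ * sn).trace = (sn * AN⁻¹ * sn).trace := by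
    rw [hYh]
  -- G1 : tr(s Z) = T
  have tsZ : (s * Z).trace = (sn * AN⁻¹ * sn).trace := by
    have e1 : s * Z = σ * (sni * Y) := by
      rw [hZ_def]
      simp only [mul_assoc]
      rw [r_ss]
    rw [e1, htrE σ (sni * Y) (mul_mem hsni_mem hY_mem), ← r_snsn, r_snsni]
    exact tsnY
  -- G2 : tr(Zᴴ s) = T
  have tZs : (Zᴴ * s).trace = (sn * AN⁻¹ * sn).trace := by
    have e2 : Zᴴ * s = Yᴴ * (sni * σ) := by
      rw [hZh]
      simp only [mul_assoc]
      rw [hs2]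
    rw [e2, show Yᴴ * (sni * σ) = Yᴴ * sni * σ from (mul_assoc _ _ _).symm,
      Matrix.trace_mul_comm (Yᴴ * sni) σ, htrE σ (Yᴴ * sni) (mul_mem hYH_mem hsni_mem),
      Matrix.trace_mul_comm (E σ) (Yᴴ * sni),
      show Yᴴ * sni * E σ = Yᴴ * (sni * E σ) from mul_assoc _ _ _, hsniEσ]
    exact tYhsn
  -- tr(Zᴴ Z) = tr(Yᴴ Y)
  have tZZ : (Zᴴ * Z).trace = (Yᴴ * Y).trace := by
    have e3 : Zᴴ * Z = Yᴴ * (sni * (σ * (sni * Y))) := by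
      rw [hZh, hZ_def]
      simp only [mul_assoc]
      rw [r_ss]
    have e4 : Yᴴ * (sni * (σ * (sni * Y))) = (Yᴴ * sni) * (σ * (sni * Y)) := by
      simp only [mul_assoc]
    have e5 : (σ * (sni * Y)) * (Yᴴ * sni) = σ * (sni * (Y * (Yᴴ * sni))) := by
      simp only [mul_assoc]
    have e6 : E σ * (sni * (Y * (Yᴴ * sni))) = (E σ * (sni * Y)) * (Yᴴ * sni) := by
      simp only [mul_assoc]
    rw [e3, e4, Matrix.trace_mul_comm, e5,
      htrE σ (sni * (Y * (Yᴴ * sni)))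
        (mul_mem hsni_mem (mul_mem hY_mem (mul_mem hYH_mem hsni_mem))),
      e6, Matrix.trace_mul_comm,
      show (Yᴴ * sni) * (E σ * (sni * Y)) = Yᴴ * (sni * (E σ * (sni * Y))) from by
        simp only [mul_assoc],
      r_sniEσ, r_snsni]
  -- tr(Zᴴ Γ Z) = tr(Yᴴ ΓN Y)
  have tZGZ : (Zᴴ * (Γ * Z)).trace = (Yᴴ * (ΓN * Y)).trace := by
    have e7 : Zᴴ * (Γ * Z) = Yᴴ * (sni * (ρ * (sni * Y))) := by
      rw [hZh, hZ_def, hΓ_def]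
      simp only [mul_assoc]
      rw [r_ssi, r_sis]
    have e8 : Yᴴ * (sni * (ρ * (sni * Y))) = (Yᴴ * sni) * (ρ * (sni * Y)) := by
      simp only [mul_assoc]
    have e9 : (ρ * (sni * Y)) * (Yᴴ * sni) = ρ * (sni * (Y * (Yᴴ * sni))) := by
      simp only [mul_assoc]
    have e10 : E ρ * (sni * (Y * (Yᴴ * sni))) = (E ρ * (sni * Y)) * (Yᴴ * sni) := by
      simp only [mul_assoc]
    have e11 : (Yᴴ * sni) * (E ρ * (sni * Y)) = Yᴴ * (ΓN * Y) := by
      rw [hΓN_def]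
      simp only [mul_assoc]
    rw [e7, e8, Matrix.trace_mul_comm, e9,
      htrE ρ (sni * (Y * (Yᴴ * sni)))
        (mul_mem hsni_mem (mul_mem hY_mem (mul_mem hYH_mem hsni_mem))),
      e10, Matrix.trace_mul_comm, e11]
  -- splitting A = Γ + t
  have cAW : ∀ V : Matrix (Fin d) (Fin d) ℂ, A * V = Γ * V + (t:ℂ) • V := fun V => by
    rw [hA_def, add_mul, smul_mul_assoc, one_mul]
  have cANW : ∀ V : Matrix (Fin d) (Fin d) ℂ, AN * V = ΓN * V + (t:ℂ) • V := fun V => by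
    rw [hAN_def, add_mul, smul_mul_assoc, one_mul]
  -- G3 : tr(Zᴴ A Z) = T
  have hZAZ : (Zᴴ * (A * Z)).trace = (sn * AN⁻¹ * sn).trace := by
    have h1 : (Zᴴ * (A * Z)).trace = (Zᴴ * (Γ * Z)).trace + (t:ℂ) * (Zᴴ * Z).trace := by
      rw [cAW Z, mul_add, mul_smul_comm, Matrix.trace_add, Matrix.trace_smul, smul_eq_mul]
    have h2 : (Yᴴ * (AN * Y)).trace = (Yᴴ * (ΓN * Y)).trace + (t:ℂ) * (Yᴴ * Y).trace := by
      rw [cANW Y, mul_add, mul_smul_comm, Matrix.trace_add, Matrix.trace_smul, smul_eq_mul]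
    rw [h1, tZGZ, tZZ, ← h2, hANY]
    exact tYhsn
  -- main expansion
  have hWAW : (Wᴴ * (A * W)).trace
      = (s * A⁻¹ * s).trace - (sn * AN⁻¹ * sn).trace := by
    have hXAX : Xᴴ * (A * X) = s * A⁻¹ * s := by
      rw [hAX, hXh]
    have hZAX : Zᴴ * (A * X) = Zᴴ * s := by rw [hAX]
    have hXAZ : (Xᴴ * (A * Z)).trace = (sn * AN⁻¹ * sn).trace := by
      have e12 : Xᴴ * (A * Z) = s * Z := by
        rw [hXh, mul_assoc, ← mul_assoc A⁻¹ A Z, Matrix.nonsing_inv_mul _ hAdet, one_mul]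
      rw [e12]
      exact tsZ
    have hexp : Wᴴ * (A * W)
        = Zᴴ * (A * Z) - Zᴴ * (A * X) - (Xᴴ * (A * Z) - Xᴴ * (A * X)) := by
      rw [hW_def, Matrix.conjTranspose_sub, mul_sub A Z X, sub_mul, mul_sub, mul_sub]
    rw [hexp, Matrix.trace_sub, Matrix.trace_sub, Matrix.trace_sub, hZAZ, hZAX, tZs, hXAZ,
      hXAX]
    ring
  have hsplitW : (Wᴴ * (A * W)).trace = (Wᴴ * (Γ * W)).trace + (t:ℂ) * (Wᴴ * W).trace := by
    rw [cAW W, mul_add, mul_smul_comm, Matrix.trace_add, Matrix.trace_smul, smul_eq_mul]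
  have hkey := hWAW.symm.trans hsplitW
  have hpos1 : 0 ≤ ((Wᴴ * (Γ * W)).trace).re := by
    rw [show Wᴴ * (Γ * W) = Wᴴ * Γ * W from (mul_assoc _ _ _).symm]
    exact psd_trace_re_nonneg (hΓpsd.conjTranspose_mul_mul_same W)
  have hre : (Matrix.trace (s * A⁻¹ * s)).re - (Matrix.trace (sn * AN⁻¹ * sn)).re
      = ((Wᴴ * (Γ * W)).trace).re + t * ((Wᴴ * W).trace).re := by
    rw [← Complex.sub_re, hkey, Complex.add_re, Complex.re_ofReal_mul]
  rw [ge_iff_le, frob_sq, hre]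
  linarith

end AuxHelpers

theorem stmt8 {d : ℕ}
    (N : Subalgebra ℂ (Matrix (Fin d) (Fin d) ℂ))
    (hNstar : ∀ A ∈ N, Aᴴ ∈ N)
    (E : Matrix (Fin d) (Fin d) ℂ →ₗ[ℂ] Matrix (Fin d) (Fin d) ℂ)
    (hEpos : ∀ A : Matrix (Fin d) (Fin d) ℂ, A.PosSemidef → (E A).PosSemidef)
    (hEmem : ∀ A : Matrix (Fin d) (Fin d) ℂ, E A ∈ N)
    (hEfix : ∀ B ∈ N, E B = B)
    (hEmod : ∀ (A : Matrix (Fin d) (Fin d) ℂ), ∀ B ∈ N, E (A * B) = E A * B)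
    (hEtr : ∀ A : Matrix (Fin d) (Fin d) ℂ, (E A).trace = A.trace)
    (σ ρ : Matrix (Fin d) (Fin d) ℂ)
    (hσ : σ.PosDef) (hσtr : σ.trace = 1)
    (hρ : ρ.PosDef) (hρtr : ρ.trace = 1) :
    ∀ t : ℝ, 0 < t →
      (Matrix.trace (msqrt σ * (misqrt σ * ρ * misqrt σ + (t : ℂ) • 1)⁻¹ * msqrt σ)).re -
          (Matrix.trace (msqrt (E σ) *
            (misqrt (E σ) * E ρ * misqrt (E σ) + (t : ℂ) • 1)⁻¹ * msqrt (E σ))).re ≥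
        t * frob (msqrt σ * misqrt (E σ) *
            E ((misqrt (E σ) * E ρ * misqrt (E σ) + (t : ℂ) • 1)⁻¹ * msqrt (E σ)) -
          (misqrt σ * ρ * misqrt σ + (t : ℂ) • 1)⁻¹ * msqrt σ) ^ 2 := by
  intro t ht
  have hσpsd := hσ.posSemidef
  have hEσpsd : (E σ).PosSemidef := hEpos σ hσpsd
  have hE1 : E (1 : Matrix (Fin d) (Fin d) ℂ) = 1 := hEfix 1 (one_mem N)
  have hNe : Nonempty (Fin d) := by
    by_contra h
    rw [not_nonempty_iff] at h
    rw [Matrix.trace] at hσtr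
    simp at hσtr
  -- E σ is positive definite
  have hEσ : (E σ).PosDef := by
    set c := Finset.univ.inf' Finset.univ_nonempty hσ.1.eigenvalues with hc_def
    have hcpos : 0 < c := by
      rw [hc_def]
      exact (Finset.lt_inf'_iff _).mpr fun i _ => hσ.eigenvalues_pos i
    have hsub : (σ - (c:ℂ) • 1).PosSemidef := by
      have h1 : hσ.1.cfc (fun x => x - c) = σ - (c:ℂ) • 1 := by
        rw [mcfc_sub hσ.1 (fun x => x) (fun _ => c), mcfc_id, mcfc_const]
      rw [← h1]
      exact mcfc_psd hσ.1 _ fun i => sub_nonneg.mpr (Finset.inf'_le _ (Finset.mem_univ i))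
    have h3 : (E σ - (c:ℂ) • 1).PosSemidef := by
      have h4 : E σ - (c:ℂ) • 1 = E (σ - (c:ℂ) • 1) := by
        rw [map_sub, LinearMap.map_smul, hE1]
      rw [h4]
      exact hEpos _ hsub
    have h5 : E σ = (E σ - (c:ℂ) • 1) + (c:ℂ) • 1 := by rw [sub_add_cancel]
    rw [h5]
    exact Matrix.PosDef.posSemidef_add h3 (smul_one_posDef hcpos)
  -- memberships of the square roots
  have hsn_mem : msqrt (E σ) ∈ N := by
    rw [msqrt_eq hEσ.1]
    exact mcfc_mem hEσ.1 N (hEmem σ) _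
  have hsni_mem : misqrt (E σ) ∈ N := by
    rw [misqrt_eq hEσ.1]
    exact mcfc_mem hEσ.1 N (hEmem σ) _
  -- positivity of Γ and ΓN
  have hΓpsd : (misqrt σ * ρ * misqrt σ).PosSemidef := by
    have h := hρ.posSemidef.mul_mul_conjTranspose_same (misqrt σ)
    rwa [(misqrt_herm hσ.1).eq] at h
  have hΓNpsd : (misqrt (E σ) * E ρ * misqrt (E σ)).PosSemidef := by
    have h := (hEpos ρ hρ.posSemidef).mul_mul_conjTranspose_same (misqrt (E σ))
    rwa [(misqrt_herm hEσ.1).eq] at h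
  have hApos : (misqrt σ * ρ * misqrt σ + (t:ℂ) • 1).PosDef :=
    Matrix.PosDef.posSemidef_add hΓpsd (smul_one_posDef ht)
  have hANpos : (misqrt (E σ) * E ρ * misqrt (E σ) + (t:ℂ) • 1).PosDef :=
    Matrix.PosDef.posSemidef_add hΓNpsd (smul_one_posDef ht)
  have hAdet : IsUnit (misqrt σ * ρ * misqrt σ + (t:ℂ) • 1).det :=
    hApos.det_pos.ne'.isUnit
  have hANdet : IsUnit (misqrt (E σ) * E ρ * misqrt (E σ) + (t:ℂ) • 1).det :=
    hANpos.det_pos.ne'.isUnit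
  -- membership of AN⁻¹
  have hAN_mem : misqrt (E σ) * E ρ * misqrt (E σ) + (t:ℂ) • 1 ∈ N :=
    add_mem (mul_mem (mul_mem hsni_mem (hEmem ρ)) hsni_mem)
      (N.smul_mem (one_mem N) ((t:ℂ)))
  have hANinv_mem : (misqrt (E σ) * E ρ * misqrt (E σ) + (t:ℂ) • 1)⁻¹ ∈ N := by
    have hinv_eq : (misqrt (E σ) * E ρ * misqrt (E σ) + (t:ℂ) • 1)⁻¹
        = hANpos.1.cfc (fun x => x⁻¹) := by
      apply Matrix.inv_eq_right_inv
      calc (misqrt (E σ) * E ρ * misqrt (E σ) + (t:ℂ) • 1) * hANpos.1.cfc (fun x => x⁻¹)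
          = hANpos.1.cfc (fun x => x) * hANpos.1.cfc (fun x => x⁻¹) := by
            rw [mcfc_id]
        _ = 1 := by
            rw [mcfc_mul, mcfc_congr hANpos.1 (g := fun _ => 1)
              (fun i => mul_inv_cancel₀ (hANpos.eigenvalues_pos i).ne'), mcfc_one]
    rw [hinv_eq]
    exact mcfc_mem hANpos.1 N hAN_mem _
  have hE_Y : E ((misqrt (E σ) * E ρ * misqrt (E σ) + (t:ℂ) • 1)⁻¹ * msqrt (E σ))
      = (misqrt (E σ) * E ρ * misqrt (E σ) + (t:ℂ) • 1)⁻¹ * msqrt (E σ) :=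
    hEfix _ (mul_mem hANinv_mem hsn_mem)
  exact core N hNstar E hEmod hEtr σ ρ (msqrt σ) (misqrt σ) (msqrt (E σ)) (misqrt (E σ)) t ht
    hΓpsd (msqrt_herm hσ.1).eq (msqrt_herm hEσ.1).eq (misqrt_herm hEσ.1).eq
    (msqrt_mul_self hσ) (msqrt_mul_self hEσ)
    (msqrt_mul_misqrt hσ) (misqrt_mul_msqrt hσ)
    (msqrt_mul_misqrt hEσ) (misqrt_mul_msqrt hEσ)
    hsn_mem hsni_mem hAdet hANdet
    (posDef_inv_herm hApos) (posDef_inv_herm hANpos)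
    hANinv_mem hE_Y
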